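/- Let T be a noncrossing tree on [n] and let P = x_{e_1}···x_{e_{n−1}} be an ordering of the edges of T (viewed as a word). If P respects T (for every vertex i, the left-to-right order in P of the edges incident to i agrees with the clockwise order of those edges around i in the drawing of T), then the product of the corresponding transpositions, read left to right, equals the n-cycle (1 2 ··· n). -/

import Mathlib

/-- A graph on `Fin n` is noncrossing if it has no pair of edges `{a,c}` and `{b,d}`
with `a < b < c < d`. -/
def Noncrossing {n : ℕ} (G : SimpleGraph (Fin n)) : Prop :=
  ∀ a b c d : Fin n, a < b → b < c → c < d → G.Adj a c → G.Adj b d → False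

/-- In the standard drawing of a noncrossing graph (vertices on a line, arcs above),
the neighbor `k` of `v` comes strictly before the neighbor `k'` of `v` in the clockwise
order of the arcs at `v`: the arcs to smaller neighbors come first in decreasing order,
followed by the arcs to larger neighbors in decreasing order. -/
def CwBefore {n : ℕ} (v k k' : Fin n) : Prop :=
  (k < v ∧ k' < v ∧ k' < k) ∨ (k < v ∧ v < k') ∨ (v < k ∧ v < k' ∧ k' < k)

/-- The endpoint of the edge `p` other than `v`. -/
def otherEnd {n : ℕ} (p : Fin n × Fin n) (v : Fin n) : Fin n :=
  if p.1 = v then p.2 else p.1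

/-- The word `L` of edges respects the drawing: for every vertex `v`, the edges incident
to `v` occur in `L` in their clockwise order around `v`. -/
def Respects {n : ℕ} (L : List (Fin n × Fin n)) : Prop :=
  ∀ a b : Fin L.length, a < b → ∀ v : Fin n,
    ((L.get a).1 = v ∨ (L.get a).2 = v) → ((L.get b).1 = v ∨ (L.get b).2 = v) →
    CwBefore v (otherEnd (L.get a) v) (otherEnd (L.get b) v)

/-! ### Auxiliary permutation lemmas -/

section PermAux

variable {α : Type*} [DecidableEq α]

lemma swap_commute_swap {a b c d : α} (h1 : a ≠ c) (h2 : a ≠ d) (h3 : b ≠ c) (h4 : b ≠ d) :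
    Commute (Equiv.swap a b) (Equiv.swap c d) := by
  apply Equiv.Perm.Disjoint.commute
  intro z
  by_cases hz : z = a ∨ z = b
  · right
    rcases hz with rfl | rfl
    · exact Equiv.swap_apply_of_ne_of_ne h1 h2
    · exact Equiv.swap_apply_of_ne_of_ne h3 h4
  · left
    push_neg at hz
    exact Equiv.swap_apply_of_ne_of_ne hz.1 hz.2

lemma swap_commute_formPerm {x y : α} {l : List α} (hx : x ∉ l) (hy : y ∉ l) :
    Commute (Equiv.swap x y) l.formPerm := by
  apply Equiv.Perm.Disjoint.commute
  intro z
  by_cases hz : z ∈ l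
  · left
    exact Equiv.swap_apply_of_ne_of_ne (fun h => hx (h ▸ hz)) (fun h => hy (h ▸ hz))
  · right
    exact List.formPerm_apply_of_notMem hz

lemma swap_braid {a b c : α} (hab : a ≠ b) (hac : a ≠ c) (hbc : b ≠ c) :
    Equiv.swap a b * Equiv.swap b c = Equiv.swap a c * Equiv.swap a b := by
  have h := Equiv.swap_apply_apply (Equiv.swap a b) b c
  rw [Equiv.swap_apply_right, Equiv.swap_apply_of_ne_of_ne hac.symm hbc.symm] at h
  rw [h, inv_mul_cancel_right]

lemma swap_braid' {a b c : α} (hab : a ≠ b) (hac : a ≠ c) (hbc : b ≠ c) :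
    Equiv.swap a b * Equiv.swap b c = Equiv.swap b c * Equiv.swap a c := by
  have h := Equiv.swap_apply_apply (Equiv.swap b c) a c
  rw [Equiv.swap_apply_of_ne_of_ne hab hac, Equiv.swap_apply_right] at h
  rw [h, inv_mul_cancel_right]

lemma formPerm_append_eq (v w : List α) (hv : v ≠ []) (hw : w ≠ []) (h : (v ++ w).Nodup) :
    (v ++ w).formPerm = Equiv.swap (v.head hv) (w.head hw) * v.formPerm * w.formPerm := by
  induction v with
  | nil => exact absurd rfl hv
  | cons a v' ih =>
    cases v' with
    | nil =>
      cases w with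
      | nil => exact absurd rfl hw
      | cons b w' =>
        show List.formPerm (a :: b :: w') = _
        rw [List.formPerm_cons_cons]
        simp [mul_assoc]
    | cons b v'' =>
      have hne : (b :: v'') ≠ [] := by simp
      have hcons : ((a :: b :: v'') ++ w) = a :: ((b :: v'') ++ w) := rfl
      rw [hcons] at h
      have h' : ((b :: v'') ++ w).Nodup := h.of_cons
      have ha : a ∉ (b :: v'') ++ w := (List.nodup_cons.mp h).1
      have ih' := ih hne h'
      have hab : a ≠ b := fun hh => ha (by simp [hh])
      have haw : a ≠ w.head hw := fun hh => ha (by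
        rw [hh]; exact List.mem_append_right _ (List.head_mem hw))
      have hbw : b ≠ w.head hw := by
        have hdisj : (b :: v'').Disjoint w := (List.nodup_append'.mp h').2.2
        exact fun hh => hdisj (List.mem_cons_self) (hh ▸ List.head_mem hw)
      rw [hcons]
      have hcons2 : (a :: ((b :: v'') ++ w)).formPerm
          = Equiv.swap a b * ((b :: v'') ++ w).formPerm := List.formPerm_cons_cons a b (v'' ++ w)
      rw [hcons2, ih']
      have hPcons : (a :: b :: v'').formPerm = Equiv.swap a b * (b :: v'').formPerm :=
        List.formPerm_cons_cons a b v''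
      rw [hPcons]
      have hh : (b :: v'').head hne = b := rfl
      rw [hh]
      simp only [← mul_assoc]
      rw [swap_braid hab haw hbw]
      rfl

lemma formPerm_append3 (u v w : List α) (hv : v ≠ []) (hw : w ≠ []) (h : (u ++ v ++ w).Nodup) :
    (u ++ v ++ w).formPerm =
      Equiv.swap (v.head hv) (w.head hw) * v.formPerm * (u ++ w).formPerm := by
  induction u with
  | nil => simpa using formPerm_append_eq v w hv hw (by simpa using h)
  | cons x u' ih =>
    have hvw : v ++ w ≠ [] := by
      intro hh
      exact hv (List.append_eq_nil_iff.mp hh).1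
    have hhead : (v ++ w).head hvw = v.head hv := List.head_append_of_ne_nil hv
    cases u' with
    | nil =>
      have h1 : ([x] ++ (v ++ w)).Nodup := by simpa [List.append_assoc] using h
      have h1' : (x :: (v ++ w)).Nodup := h1
      have hx : x ∉ v ++ w := (List.nodup_cons.mp h1').1
      have hxv : x ∉ v := fun hh => hx (List.mem_append_left _ hh)
      have hxw : x ∉ w := fun hh => hx (List.mem_append_right _ hh)
      have hvwnd : (v ++ w).Nodup := (List.nodup_cons.mp h1').2
      have hvwdisj : v.Disjoint w := (List.nodup_append'.mp hvwnd).2.2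
      have e1 := formPerm_append_eq [x] (v ++ w) (by simp) hvw h1
      have e2 := formPerm_append_eq v w hv hw hvwnd
      have hxwnd : ([x] ++ w).Nodup := by
        rw [List.nodup_append']
        refine ⟨by simp, (List.nodup_append'.mp hvwnd).2.1, ?_⟩
        intro z hz hz'
        rw [List.mem_singleton] at hz
        exact hxw (hz ▸ hz')
      have e3 := formPerm_append_eq [x] w (by simp) hw hxwnd
      have hLHS : ((x :: []) ++ v ++ w) = [x] ++ (v ++ w) := by simp
      rw [hLHS, e1, hhead, e2, e3]
      have hv0 : x ≠ v.head hv := fun hh => hxv (hh ▸ List.head_mem hv)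
      have hw0 : x ≠ w.head hw := fun hh => hxw (hh ▸ List.head_mem hw)
      have hvw0 : v.head hv ≠ w.head hw := fun hh =>
        hvwdisj (List.head_mem hv) (hh ▸ List.head_mem hw)
      have hw0v : w.head hw ∉ v := fun hh => hvwdisj hh (List.head_mem hw)
      have hcomm : Commute (Equiv.swap x (w.head hw)) v.formPerm :=
        swap_commute_formPerm hxv hw0v
      have hsing : ([x].head (by simp) : α) = x := rfl
      rw [hsing]
      simp only [List.formPerm_singleton, mul_one, one_mul]
      calc Equiv.swap x (v.head hv) * (Equiv.swap (v.head hv) (w.head hw) * v.formPerm * w.formPerm)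
          = (Equiv.swap x (v.head hv) * Equiv.swap (v.head hv) (w.head hw)) * v.formPerm * w.formPerm := by
            simp only [mul_assoc]
        _ = (Equiv.swap (v.head hv) (w.head hw) * Equiv.swap x (w.head hw)) * v.formPerm * w.formPerm := by
            rw [swap_braid' hv0 hw0 hvw0]
        _ = Equiv.swap (v.head hv) (w.head hw) * v.formPerm * (Equiv.swap x (w.head hw) * w.formPerm) := by
            simp only [mul_assoc]
            rw [← mul_assoc (Equiv.swap x (w.head hw)) v.formPerm, hcomm.eq, mul_assoc]
    | cons y u'' =>
      have hcons : ((x :: y :: u'') ++ v ++ w) = x :: ((y :: u'') ++ v ++ w) := rfl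
      rw [hcons] at h
      have h' : ((y :: u'') ++ v ++ w).Nodup := h.of_cons
      have hx : x ∉ (y :: u'') ++ v ++ w := (List.nodup_cons.mp h).1
      have hxv : x ∉ v := fun hh => hx (List.mem_append_left _ (List.mem_append_right _ hh))
      have hxw : x ∉ w := fun hh => hx (List.mem_append_right _ hh)
      have hdisj : (y :: u'').Disjoint (v ++ w) := by
        have h'' : ((y :: u'') ++ (v ++ w)).Nodup := by
          rw [← List.append_assoc]; exact h'
        exact (List.nodup_append'.mp h'').2.2
      have hyuv : y ∉ v := fun hh =>
        hdisj (List.mem_cons_self) (List.mem_append_left _ hh)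
      have hyw : y ∉ w := fun hh =>
        hdisj (List.mem_cons_self) (List.mem_append_right _ hh)
      have hvws : v.head hv ∈ v := List.head_mem hv
      have hwws : w.head hw ∈ w := List.head_mem hw
      have ih' := ih h'
      have hc1 : ((x :: y :: u'') ++ v ++ w).formPerm
          = Equiv.swap x y * ((y :: u'') ++ v ++ w).formPerm :=
        List.formPerm_cons_cons x y (u'' ++ v ++ w)
      rw [hc1, ih']
      have hc3 : ((x :: y :: u'') ++ w).formPerm
          = Equiv.swap x y * ((y :: u'') ++ w).formPerm :=
        List.formPerm_cons_cons x y (u'' ++ w)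
      rw [hc3]
      have hcomm1 : Commute (Equiv.swap x y)
          (Equiv.swap (v.head hv) (w.head hw)) :=
        swap_commute_swap (fun hh => hxv (hh ▸ hvws)) (fun hh => hxw (hh ▸ hwws))
          (fun hh => hyuv (hh ▸ hvws)) (fun hh => hyw (hh ▸ hwws))
      have hcomm2 : Commute (Equiv.swap x y) v.formPerm := swap_commute_formPerm hxv hyuv
      calc Equiv.swap x y * (Equiv.swap (v.head hv) (w.head hw) * v.formPerm *
              ((y :: u'') ++ w).formPerm)
          = (Equiv.swap x y * Equiv.swap (v.head hv) (w.head hw)) * v.formPerm *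
              ((y :: u'') ++ w).formPerm := by simp only [mul_assoc]
        _ = (Equiv.swap (v.head hv) (w.head hw) * Equiv.swap x y) * v.formPerm *
              ((y :: u'') ++ w).formPerm := by rw [hcomm1.eq]
        _ = Equiv.swap (v.head hv) (w.head hw) * (Equiv.swap x y * v.formPerm) *
              ((y :: u'') ++ w).formPerm := by simp only [mul_assoc]
        _ = Equiv.swap (v.head hv) (w.head hw) * (v.formPerm * Equiv.swap x y) *
              ((y :: u'') ++ w).formPerm := by rw [hcomm2.eq]
        _ = Equiv.swap (v.head hv) (w.head hw) * v.formPerm *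
              (Equiv.swap x y * ((y :: u'') ++ w).formPerm) := by simp only [mul_assoc]

end PermAux

/-! ### Sorted list utilities -/

section SortAux

variable {α : Type*} [LinearOrder α]

lemma filter_append_filter_not_of_sorted {l : List α} {p : α → Bool}
    (hl : l.Pairwise (· ≤ ·)) (hp : ∀ x y : α, x ≤ y → p y = true → p x = true) :
    l.filter p ++ l.filter (fun x => !p x) = l := by
  induction l with
  | nil => simp
  | cons a t ih =>
    rw [List.pairwise_cons] at hl
    by_cases hpa : p a
    · rw [List.filter_cons_of_pos hpa, List.filter_cons_of_neg (by simp [hpa]),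
        List.cons_append, ih hl.2]
    · have hall : ∀ x ∈ t, p x = false := by
        intro x hx
        rcases Bool.eq_false_or_eq_true (p x) with h | h
        · exact absurd (hp a x (hl.1 x hx) h) hpa
        · exact h
      have h1 : t.filter p = [] := List.filter_eq_nil_iff.mpr (fun x hx => by simp [hall x hx])
      have h2 : t.filter (fun x => !p x) = t :=
        List.filter_eq_self.mpr (fun x hx => by simp [hall x hx])
      rw [List.filter_cons_of_neg (by simpa using hpa), List.filter_cons_of_pos (by simpa using hpa),
        h1, h2, List.nil_append]

lemma eq_of_sorted_lt_mem_iff {l₁ l₂ : List α} (h₁ : l₁.Pairwise (· < ·)) (h₂ : l₂.Pairwise (· < ·))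
    (h : ∀ x, x ∈ l₁ ↔ x ∈ l₂) : l₁ = l₂ := by
  have hn₁ : l₁.Nodup := h₁.imp ne_of_lt
  have hn₂ : l₂.Nodup := h₂.imp ne_of_lt
  exact List.Perm.eq_of_pairwise'
    (h₁.imp le_of_lt) (h₂.imp le_of_lt)
    (List.perm_of_nodup_nodup_toFinset_eq hn₁ hn₂ (by ext z; simp [h z]))

lemma head_le_of_sorted {l : List α} (hl : l.Pairwise (· ≤ ·)) {x : α} (hx : x ∈ l)
    (hne : l ≠ []) : l.head hne ≤ x := by
  cases l with
  | nil => simp at hx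
  | cons a t =>
    rcases List.mem_cons.mp hx with rfl | hm
    · exact le_refl _
    · exact (List.pairwise_cons.mp hl).1 x hm

end SortAux

/-! ### Edge relations -/

/-- Collapse map used for the `A`-side connectivity argument. -/
def piA {n : ℕ} (a b z : Fin n) : Fin n := if a ≤ z ∧ z < b then z else a

/-- Collapse map used for the `B`-side connectivity argument. -/
def piB {n : ℕ} (a b z : Fin n) : Fin n := if a ≤ z ∧ z < b then b else z

lemma piA_in {n : ℕ} {a b z : Fin n} (h : a ≤ z ∧ z < b) : piA a b z = z := if_pos h

lemma piA_out {n : ℕ} {a b z : Fin n} (h : ¬(a ≤ z ∧ z < b)) : piA a b z = a := if_neg h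

lemma piB_in {n : ℕ} {a b z : Fin n} (h : a ≤ z ∧ z < b) : piB a b z = b := if_pos h

lemma piB_out {n : ℕ} {a b z : Fin n} (h : ¬(a ≤ z ∧ z < b)) : piB a b z = z := if_neg h

/-- The relation on vertices generated by the edges in `L`. -/
def ERel {n : ℕ} (L : List (Fin n × Fin n)) (x y : Fin n) : Prop :=
  ∃ p ∈ L, (p.1 = x ∧ p.2 = y) ∨ (p.1 = y ∧ p.2 = x)

/-- The pairwise relation corresponding to `Respects`. -/
def Rp {n : ℕ} (p q : Fin n × Fin n) : Prop :=
  ∀ v, (p.1 = v ∨ p.2 = v) → (q.1 = v ∨ q.2 = v) →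
    CwBefore v (otherEnd p v) (otherEnd q v)

lemma rtg_lift {β : Type*} {r r' : β → β → Prop} (f : β → β)
    (hf : ∀ a b, r a b → Relation.ReflTransGen r' (f a) (f b)) {a b : β}
    (h : Relation.ReflTransGen r a b) : Relation.ReflTransGen r' (f a) (f b) := by
  induction h with
  | refl => exact Relation.ReflTransGen.refl
  | tail _ hstep ih => exact ih.trans (hf _ _ hstep)

lemma rtg_nil {n : ℕ} {x y : Fin n}
    (h : Relation.ReflTransGen (ERel ([] : List (Fin n × Fin n))) x y) : x = y := by
  induction h with
  | refl => rfl
  | tail _ hstep ih => rcases hstep with ⟨p, hp, _⟩; simp at hp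

/-- The key combinatorial dichotomy: any later edge `q` is either entirely inside the
interval `[e.1, e.2)` or entirely outside of it. -/
lemma edge_dichotomy {n : ℕ} {e q : Fin n × Fin n} (he : e.1 < e.2) (hq : q.1 < q.2)
    (hne : ¬(q.1 = e.1 ∧ q.2 = e.2))
    (hcr1 : ¬(q.1 < e.1 ∧ e.1 < q.2 ∧ q.2 < e.2))
    (hcr2 : ¬(e.1 < q.1 ∧ q.1 < e.2 ∧ e.2 < q.2))
    (hr : Rp e q) :
    (e.1 ≤ q.1 ∧ q.1 < e.2 ∧ e.1 ≤ q.2 ∧ q.2 < e.2) ∨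
      (¬(e.1 ≤ q.1 ∧ q.1 < e.2) ∧ ¬(e.1 ≤ q.2 ∧ q.2 < e.2)) := by
  have Ha : q.1 = e.1 → e.1 < q.2 ∧ q.2 < e.2 := by
    intro hh
    have hcb := hr e.1 (Or.inl rfl) (Or.inl hh)
    rw [show otherEnd e e.1 = e.2 from if_pos rfl,
      show otherEnd q e.1 = q.2 from if_pos hh] at hcb
    rcases hcb with ⟨h1, _⟩ | ⟨h1, _⟩ | ⟨_, h2, h3⟩
    · exact absurd h1 (asymm he)
    · exact absurd h1 (asymm he)
    · exact ⟨h2, h3⟩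
  have Ha' : q.2 ≠ e.1 := by
    intro hh
    have hq1 : q.1 ≠ e.1 := ne_of_lt (hh ▸ hq)
    have hcb := hr e.1 (Or.inl rfl) (Or.inr hh)
    rw [show otherEnd e e.1 = e.2 from if_pos rfl,
      show otherEnd q e.1 = q.1 from if_neg hq1] at hcb
    rcases hcb with ⟨h1, _⟩ | ⟨h1, _⟩ | ⟨_, h2, _⟩
    · exact absurd h1 (asymm he)
    · exact absurd h1 (asymm he)
    · exact absurd (hh ▸ hq) (asymm h2)
  have Hb : q.2 = e.2 → q.1 < e.1 := by
    intro hh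
    have he1 : e.1 ≠ e.2 := ne_of_lt he
    have hq1 : q.1 ≠ e.2 := ne_of_lt (hh ▸ hq)
    have hcb := hr e.2 (Or.inr rfl) (Or.inr hh)
    rw [show otherEnd e e.2 = e.1 from if_neg he1,
      show otherEnd q e.2 = q.1 from if_neg hq1] at hcb
    rcases hcb with ⟨_, _, h3⟩ | ⟨_, h2⟩ | ⟨h1, _, _⟩
    · exact h3
    · exact absurd (hh ▸ hq) (asymm h2)
    · exact absurd h1 (asymm he)
  rcases lt_trichotomy q.1 e.1 with h1 | h1 | h1
  · right
    refine ⟨fun hh => absurd hh.1 (not_le.mpr h1), ?_⟩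
    rintro ⟨hh1, hh2⟩
    exact hcr1 ⟨h1, lt_of_le_of_ne hh1 (Ne.symm Ha'), hh2⟩
  · left
    obtain ⟨h2, h3⟩ := Ha h1
    exact ⟨le_of_eq h1.symm, h1 ▸ he, le_of_lt h2, h3⟩
  · rcases lt_trichotomy q.1 e.2 with h2 | h2 | h2
    · left
      refine ⟨le_of_lt h1, h2, le_of_lt (lt_trans h1 hq), ?_⟩
      rcases lt_trichotomy q.2 e.2 with h3 | h3 | h3
      · exact h3
      · exact absurd (Hb h3) (asymm h1)
      · exact absurd ⟨h1, h2, h3⟩ hcr2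
    · right
      have hq2 : e.2 < q.2 := h2 ▸ hq
      exact ⟨fun hh => (ne_of_lt hh.2) h2, fun hh => absurd hh.2 (not_lt.mpr (le_of_lt hq2))⟩
    · right
      exact ⟨fun hh => absurd hh.2 (not_lt.mpr (le_of_lt h2)),
        fun hh => absurd hh.2 (not_lt.mpr (le_of_lt (lt_trans h2 hq)))⟩

/-- Splitting a product of swaps along a predicate, when swaps from the two classes commute. -/
lemma prod_split {n : ℕ} (l : List (Fin n × Fin n)) (p : Fin n × Fin n → Bool)
    (hc : ∀ x ∈ l, ∀ y ∈ l, p x = true → p y = false →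
      Commute (Equiv.swap x.1 x.2) (Equiv.swap y.1 y.2)) :
    (l.map fun q => Equiv.swap q.1 q.2).prod =
      ((l.filter p).map fun q => Equiv.swap q.1 q.2).prod *
        ((l.filter fun q => !p q).map fun q => Equiv.swap q.1 q.2).prod := by
  induction l with
  | nil => simp
  | cons x t ih =>
    have ih' := ih fun a ha b hb => hc a (List.mem_cons_of_mem _ ha) b (List.mem_cons_of_mem _ hb)
    by_cases hx : p x
    · rw [List.map_cons, List.prod_cons, ih', List.filter_cons_of_pos hx,
        List.filter_cons_of_neg (by simp [hx]), List.map_cons, List.prod_cons, mul_assoc]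
    · have hxf : p x = false := by simpa using hx
      have hcomm : Commute (Equiv.swap x.1 x.2)
          ((t.filter p).map fun q => Equiv.swap q.1 q.2).prod := by
        apply Commute.list_prod_right
        intro g hg
        rw [List.mem_map] at hg
        obtain ⟨y, hy, rfl⟩ := hg
        exact (hc y (List.mem_cons_of_mem _ (List.mem_of_mem_filter hy)) x
          List.mem_cons_self (List.of_mem_filter hy) hxf).symm
      rw [List.map_cons, List.prod_cons, ih', List.filter_cons_of_neg (by simpa using hx),
        List.filter_cons_of_pos (by simpa using hx), List.map_cons, List.prod_cons,
        ← mul_assoc, hcomm.eq, mul_assoc]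

lemma formPerm_sort_eq_one {n : ℕ} (s : Finset (Fin n))
    (hconn : ∀ x ∈ s, ∀ y ∈ s,
      Relation.ReflTransGen (ERel ([] : List (Fin n × Fin n))) x y) :
    (s.sort (· ≤ ·)).formPerm = 1 := by
  rcases s.eq_empty_or_nonempty with rfl | ⟨r, hr⟩
  · simp
  · have hs : s = {r} := by
      apply Finset.eq_singleton_iff_unique_mem.mpr
      exact ⟨hr, fun x hx => rtg_nil (hconn x hx r hr)⟩
    rw [hs, Finset.sort_singleton]
    exact List.formPerm_singleton r

/-- The main induction. -/
lemma aux_main {n : ℕ} :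
    ∀ (N : ℕ) (L : List (Fin n × Fin n)) (s : Finset (Fin n)),
      L.length ≤ N →
      (∀ p ∈ L, p.1 < p.2 ∧ p.1 ∈ s ∧ p.2 ∈ s) →
      (∀ p ∈ L, ∀ q ∈ L, ¬(p.1 < q.1 ∧ q.1 < p.2 ∧ p.2 < q.2)) →
      ((L.map fun p => Sym2.mk p.1 p.2).Nodup) →
      List.Pairwise Rp L →
      (∀ x ∈ s, ∀ y ∈ s, Relation.ReflTransGen (ERel L) x y) →
      (L.map fun p => Equiv.swap p.1 p.2).prod = (s.sort (· ≤ ·)).formPerm := by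
  intro N
  induction N with
  | zero =>
    intro L s hlen _ _ _ _ hconn
    obtain rfl : L = [] := List.eq_nil_of_length_eq_zero (Nat.le_zero.mp hlen)
    simpa using (formPerm_sort_eq_one s hconn).symm
  | succ N ihN =>
    intro L s hlen hedges hnc hnd hresp hconn
    cases L with
    | nil => simpa using (formPerm_sort_eq_one s hconn).symm
    | cons e L' =>
      obtain ⟨he, ha_s, hb_s⟩ := hedges e List.mem_cons_self
      -- the dichotomy for all later edges
      have hdi : ∀ q ∈ L', (e.1 ≤ q.1 ∧ q.1 < e.2 ∧ e.1 ≤ q.2 ∧ q.2 < e.2) ∨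
          (¬(e.1 ≤ q.1 ∧ q.1 < e.2) ∧ ¬(e.1 ≤ q.2 ∧ q.2 < e.2)) := by
        intro q hq
        have hq' := hedges q (List.mem_cons_of_mem _ hq)
        apply edge_dichotomy he hq'.1
        · rintro ⟨h1, h2⟩
          have hmm : Sym2.mk e.1 e.2 ∈ L'.map (fun p => Sym2.mk p.1 p.2) := by
            have : Sym2.mk q.1 q.2 = Sym2.mk e.1 e.2 := by rw [h1, h2]
            rw [← this]
            exact List.mem_map_of_mem hq
          have hnd' : ((e :: L').map fun p => Sym2.mk p.1 p.2).Nodup := hnd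
          rw [List.map_cons, List.nodup_cons] at hnd'
          exact hnd'.1 hmm
        · exact hnc q (List.mem_cons_of_mem _ hq) e List.mem_cons_self
        · exact hnc e List.mem_cons_self q (List.mem_cons_of_mem _ hq)
        · exact (List.pairwise_cons.mp hresp).1 q hq
      set P : Fin n × Fin n → Bool := fun q => decide (e.1 ≤ q.1 ∧ q.1 < e.2) with hP
      set LA := L'.filter P with hLAdef
      set LB := L'.filter (fun q => !P q) with hLBdef
      set A : Finset (Fin n) := s.filter (fun x => e.1 ≤ x ∧ x < e.2) with hAdef
      set B : Finset (Fin n) := s.filter (fun x => ¬(e.1 ≤ x ∧ x < e.2)) with hBdef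
      have hLAsub : List.Sublist LA (e :: L') := (L'.filter_sublist).trans (List.sublist_cons_self e L')
      have hLBsub : List.Sublist LB (e :: L') := (L'.filter_sublist).trans (List.sublist_cons_self e L')
      have hLA : ∀ q ∈ LA, q ∈ L' ∧ (e.1 ≤ q.1 ∧ q.1 < e.2) ∧ (e.1 ≤ q.2 ∧ q.2 < e.2) := by
        intro q hq
        have h1 := List.mem_of_mem_filter hq
        have h2 : e.1 ≤ q.1 ∧ q.1 < e.2 := by
          have := List.of_mem_filter hq
          rw [hP] at this
          exact of_decide_eq_true this
        rcases hdi q h1 with ⟨ha1, ha2, ha3, ha4⟩ | ⟨hb1, _⟩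
        · exact ⟨h1, ⟨ha1, ha2⟩, ⟨ha3, ha4⟩⟩
        · exact absurd h2 hb1
      have hLB : ∀ q ∈ LB, q ∈ L' ∧ ¬(e.1 ≤ q.1 ∧ q.1 < e.2) ∧ ¬(e.1 ≤ q.2 ∧ q.2 < e.2) := by
        intro q hq
        have h1 := List.mem_of_mem_filter hq
        have h2 : ¬(e.1 ≤ q.1 ∧ q.1 < e.2) := by
          have hb := List.of_mem_filter hq
          rw [Bool.not_eq_true'] at hb
          rw [hP] at hb
          exact of_decide_eq_false hb
        rcases hdi q h1 with ⟨ha1, ha2, _⟩ | ⟨hb1, hb2⟩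
        · exact absurd ⟨ha1, ha2⟩ h2
        · exact ⟨h1, hb1, hb2⟩
      have hlen' : L'.length ≤ N := by
        have := hlen
        simp only [List.length_cons] at this
        omega
      -- A side hypotheses
      have hedgesA : ∀ p ∈ LA, p.1 < p.2 ∧ p.1 ∈ A ∧ p.2 ∈ A := by
        intro p hp
        obtain ⟨hpL, hp1, hp2⟩ := hLA p hp
        obtain ⟨hlt, hs1, hs2⟩ := hedges p (List.mem_cons_of_mem _ hpL)
        exact ⟨hlt, Finset.mem_filter.mpr ⟨hs1, hp1⟩, Finset.mem_filter.mpr ⟨hs2, hp2⟩⟩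
      have hedgesB : ∀ p ∈ LB, p.1 < p.2 ∧ p.1 ∈ B ∧ p.2 ∈ B := by
        intro p hp
        obtain ⟨hpL, hp1, hp2⟩ := hLB p hp
        obtain ⟨hlt, hs1, hs2⟩ := hedges p (List.mem_cons_of_mem _ hpL)
        exact ⟨hlt, Finset.mem_filter.mpr ⟨hs1, hp1⟩, Finset.mem_filter.mpr ⟨hs2, hp2⟩⟩
      have hncA : ∀ p ∈ LA, ∀ q ∈ LA, ¬(p.1 < q.1 ∧ q.1 < p.2 ∧ p.2 < q.2) :=
        fun p hp q hq => hnc p (hLAsub.mem hp) q (hLAsub.mem hq)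
      have hncB : ∀ p ∈ LB, ∀ q ∈ LB, ¬(p.1 < q.1 ∧ q.1 < p.2 ∧ p.2 < q.2) :=
        fun p hp q hq => hnc p (hLBsub.mem hp) q (hLBsub.mem hq)
      have hndA : (LA.map fun p => Sym2.mk p.1 p.2).Nodup :=
        hnd.sublist (hLAsub.map _)
      have hndB : (LB.map fun p => Sym2.mk p.1 p.2).Nodup :=
        hnd.sublist (hLBsub.map _)
      have hrespA : List.Pairwise Rp LA := hresp.sublist hLAsub
      have hrespB : List.Pairwise Rp LB := hresp.sublist hLBsub
      -- connectivity for the two pieces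
      have hstepA : ∀ x y, ERel (e :: L') x y →
          Relation.ReflTransGen (ERel LA) (piA e.1 e.2 x) (piA e.1 e.2 y) := by
        rintro x y ⟨p, hp, hor⟩
        rcases List.mem_cons.mp hp with heq | hp'
        · have h1 : piA e.1 e.2 e.1 = e.1 := piA_in ⟨le_refl _, he⟩
          have h2 : piA e.1 e.2 e.2 = e.1 := piA_out (fun hh => absurd hh.2 (lt_irrefl _))
          rcases hor with ⟨hu, hv⟩ | ⟨hu, hv⟩
          · rw [← hu, ← hv, heq, h1, h2]
          · rw [← hu, ← hv, heq, h1, h2]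
        · rcases hdi p hp' with ⟨ha1, ha2, ha3, ha4⟩ | ⟨hb1, hb2⟩
          · have hpin : p ∈ LA := List.mem_filter.mpr ⟨hp', by
              rw [hP]; exact decide_eq_true ⟨ha1, ha2⟩⟩
            have h1 : piA e.1 e.2 p.1 = p.1 := piA_in ⟨ha1, ha2⟩
            have h2 : piA e.1 e.2 p.2 = p.2 := piA_in ⟨ha3, ha4⟩
            rcases hor with ⟨hu, hv⟩ | ⟨hu, hv⟩
            · rw [← hu, ← hv, h1, h2]
              exact Relation.ReflTransGen.single ⟨p, hpin, Or.inl ⟨rfl, rfl⟩⟩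
            · rw [← hu, ← hv, h1, h2]
              exact Relation.ReflTransGen.single ⟨p, hpin, Or.inr ⟨rfl, rfl⟩⟩
          · have h1 : piA e.1 e.2 p.1 = e.1 := piA_out hb1
            have h2 : piA e.1 e.2 p.2 = e.1 := piA_out hb2
            rcases hor with ⟨hu, hv⟩ | ⟨hu, hv⟩
            · rw [← hu, ← hv, h1, h2]
            · rw [← hu, ← hv, h1, h2]
      have hconnA : ∀ x ∈ A, ∀ y ∈ A, Relation.ReflTransGen (ERel LA) x y := by
        intro x hx y hy
        have hxs := Finset.mem_filter.mp hx
        have hys := Finset.mem_filter.mp hy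
        have hlift := rtg_lift (piA e.1 e.2) hstepA (hconn x hxs.1 y hys.1)
        rwa [piA_in hxs.2, piA_in hys.2] at hlift
      have hstepB : ∀ x y, ERel (e :: L') x y →
          Relation.ReflTransGen (ERel LB) (piB e.1 e.2 x) (piB e.1 e.2 y) := by
        rintro x y ⟨p, hp, hor⟩
        rcases List.mem_cons.mp hp with heq | hp'
        · have h1 : piB e.1 e.2 e.1 = e.2 := piB_in ⟨le_refl _, he⟩
          have h2 : piB e.1 e.2 e.2 = e.2 := piB_out (fun hh => absurd hh.2 (lt_irrefl _))
          rcases hor with ⟨hu, hv⟩ | ⟨hu, hv⟩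
          · rw [← hu, ← hv, heq, h1, h2]
          · rw [← hu, ← hv, heq, h1, h2]
        · rcases hdi p hp' with ⟨ha1, ha2, ha3, ha4⟩ | ⟨hb1, hb2⟩
          · have h1 : piB e.1 e.2 p.1 = e.2 := piB_in ⟨ha1, ha2⟩
            have h2 : piB e.1 e.2 p.2 = e.2 := piB_in ⟨ha3, ha4⟩
            rcases hor with ⟨hu, hv⟩ | ⟨hu, hv⟩
            · rw [← hu, ← hv, h1, h2]
            · rw [← hu, ← hv, h1, h2]
          · have hpin : p ∈ LB := List.mem_filter.mpr ⟨hp', by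
              rw [hP]; simp only [Bool.not_eq_true', decide_eq_false_iff_not]; exact hb1⟩
            have h1 : piB e.1 e.2 p.1 = p.1 := piB_out hb1
            have h2 : piB e.1 e.2 p.2 = p.2 := piB_out hb2
            rcases hor with ⟨hu, hv⟩ | ⟨hu, hv⟩
            · rw [← hu, ← hv, h1, h2]
              exact Relation.ReflTransGen.single ⟨p, hpin, Or.inl ⟨rfl, rfl⟩⟩
            · rw [← hu, ← hv, h1, h2]
              exact Relation.ReflTransGen.single ⟨p, hpin, Or.inr ⟨rfl, rfl⟩⟩
      have hconnB : ∀ x ∈ B, ∀ y ∈ B, Relation.ReflTransGen (ERel LB) x y := by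
        intro x hx y hy
        have hxs := Finset.mem_filter.mp hx
        have hys := Finset.mem_filter.mp hy
        have hlift := rtg_lift (piB e.1 e.2) hstepB (hconn x hxs.1 y hys.1)
        rwa [piB_out hxs.2, piB_out hys.2] at hlift
      -- apply the induction hypothesis to both sides
      have hlenA : LA.length ≤ N := le_trans (List.Sublist.length_le (L'.filter_sublist)) hlen'
      have hlenB : LB.length ≤ N := le_trans (List.Sublist.length_le (L'.filter_sublist)) hlen'
      have hprodA := ihN LA A hlenA hedgesA hncA hndA hrespA hconnA
      have hprodB := ihN LB B hlenB hedgesB hncB hndB hrespB hconnB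
      -- split the product of the tail
      have hsplit := prod_split L' P (by
        intro p hp q hq hpt hqf
        have hpA := hLA p (List.mem_filter.mpr ⟨hp, hpt⟩)
        have hqB := hLB q (List.mem_filter.mpr ⟨hq, by
          simp only [Bool.not_eq_true']; exact hqf⟩)
        exact swap_commute_swap
          (fun hh => hqB.2.1 (hh ▸ hpA.2.1))
          (fun hh => hqB.2.2 (hh ▸ hpA.2.1))
          (fun hh => hqB.2.1 (hh ▸ hpA.2.2))
          (fun hh => hqB.2.2 (hh ▸ hpA.2.2)))
      rw [List.map_cons, List.prod_cons, hsplit, hprodA, hprodB]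
      -- sorted list surgery
      set u : List (Fin n) := (B.sort (· ≤ ·)).filter (fun z => decide (z < e.1)) with hu
      set w : List (Fin n) := (B.sort (· ≤ ·)).filter (fun z => !decide (z < e.1)) with hwdef
      set v : List (Fin n) := A.sort (· ≤ ·) with hvdef
      have huw : u ++ w = B.sort (· ≤ ·) :=
        filter_append_filter_not_of_sorted (Finset.pairwise_sort _ _)
          (fun x y hxy hy => decide_eq_true (lt_of_le_of_lt hxy (of_decide_eq_true hy)))
      have haA : e.1 ∈ A := Finset.mem_filter.mpr ⟨ha_s, ⟨le_refl _, he⟩⟩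
      have hv_ne : v ≠ [] := List.ne_nil_of_mem ((Finset.mem_sort _).mpr haA)
      have hbB : e.2 ∈ B := Finset.mem_filter.mpr ⟨hb_s, fun hh => absurd hh.2 (lt_irrefl _)⟩
      have hbw : e.2 ∈ w := List.mem_filter.mpr ⟨(Finset.mem_sort _).mpr hbB, by
        simp [not_lt.mpr (le_of_lt he)]⟩
      have hw_ne : w ≠ [] := List.ne_nil_of_mem hbw
      have hmemu : ∀ z ∈ u, z ∈ s ∧ z < e.1 := by
        intro z hz
        have h1 := List.mem_filter.mp hz
        have h2 := Finset.mem_filter.mp ((Finset.mem_sort _).mp h1.1)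
        exact ⟨h2.1, of_decide_eq_true h1.2⟩
      have hmemv : ∀ z ∈ v, z ∈ s ∧ e.1 ≤ z ∧ z < e.2 := by
        intro z hz
        have h2 := Finset.mem_filter.mp ((Finset.mem_sort _).mp hz)
        exact ⟨h2.1, h2.2⟩
      have hmemw : ∀ z ∈ w, z ∈ s ∧ e.2 ≤ z := by
        intro z hz
        have h1 := List.mem_filter.mp hz
        have h2 := Finset.mem_filter.mp ((Finset.mem_sort _).mp h1.1)
        have h3 : ¬ z < e.1 := by simpa using h1.2
        have h5 : e.1 ≤ z := not_lt.mp h3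
        have h6 : ¬ z < e.2 := fun hc => h2.2 ⟨h5, hc⟩
        exact ⟨h2.1, not_lt.mp h6⟩
      have hvhead : v.head hv_ne = e.1 :=
        le_antisymm
          (head_le_of_sorted (Finset.pairwise_sort _ _) ((Finset.mem_sort _).mpr haA) hv_ne)
          (hmemv _ (List.head_mem hv_ne)).2.1
      have hwsorted : w.Pairwise (· ≤ ·) :=
        List.Pairwise.sublist (List.filter_sublist) (Finset.pairwise_sort _ _)
      have hwhead : w.head hw_ne = e.2 :=
        le_antisymm (head_le_of_sorted hwsorted hbw hw_ne) (hmemw _ (List.head_mem hw_ne)).2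
      have husorted : u.Pairwise (· < ·) :=
        List.Pairwise.sublist (List.filter_sublist) ((Finset.sortedLT_sort _).pairwise)
      have hvsorted : v.Pairwise (· < ·) := (Finset.sortedLT_sort _).pairwise
      have hwsorted' : w.Pairwise (· < ·) :=
        List.Pairwise.sublist (List.filter_sublist) ((Finset.sortedLT_sort _).pairwise)
      have hsort_eq : s.sort (· ≤ ·) = u ++ v ++ w := by
        apply eq_of_sorted_lt_mem_iff ((Finset.sortedLT_sort _).pairwise)
        · apply List.pairwise_append.mpr
          refine ⟨List.pairwise_append.mpr ⟨husorted, hvsorted, ?_⟩, hwsorted', ?_⟩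
          · intro z hz y hy
            exact lt_of_lt_of_le (hmemu z hz).2 (hmemv y hy).2.1
          · intro z hz y hy
            rcases List.mem_append.mp hz with hz' | hz'
            · exact lt_of_lt_of_le (lt_trans (hmemu z hz').2 he) (hmemw y hy).2
            · exact lt_of_lt_of_le (hmemv z hz').2.2 (hmemw y hy).2
        · intro z
          simp only [List.mem_append, Finset.mem_sort]
          constructor
          · intro hz
            by_cases hc : e.1 ≤ z ∧ z < e.2
            · exact Or.inl (Or.inr ((Finset.mem_sort _).mpr (Finset.mem_filter.mpr ⟨hz, hc⟩)))
            · by_cases hc2 : z < e.1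
              · exact Or.inl (Or.inl (List.mem_filter.mpr
                  ⟨(Finset.mem_sort _).mpr (Finset.mem_filter.mpr ⟨hz, hc⟩), decide_eq_true hc2⟩))
              · exact Or.inr (List.mem_filter.mpr
                  ⟨(Finset.mem_sort _).mpr (Finset.mem_filter.mpr ⟨hz, hc⟩), by
                    simp only [Bool.not_eq_true', decide_eq_false_iff_not]; exact hc2⟩)
          · intro hz
            rcases hz with (hz' | hz') | hz'
            · exact (hmemu z hz').1
            · exact (hmemv z hz').1
            · exact (hmemw z hz').1
      have hnodup_uvw : (u ++ v ++ w).Nodup := hsort_eq ▸ Finset.sort_nodup _ _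
      rw [hsort_eq, formPerm_append3 u v w hv_ne hw_ne hnodup_uvw, hvhead, hwhead, huw,
        mul_assoc]

theorem respects_prod_eq_cycle {n : ℕ} (hn : 1 ≤ n) (T : SimpleGraph (Fin n))
    (hT : T.IsTree) (hnc : Noncrossing T) (L : List (Fin n × Fin n))
    (hedges : ∀ p ∈ L, p.1 < p.2 ∧ T.Adj p.1 p.2)
    (hnodup : (L.map fun p => Sym2.mk p.1 p.2).Nodup)
    (hall : ∀ e, e ∈ T.edgeSet ↔ ∃ p ∈ L, e = Sym2.mk p.1 p.2)
    (hresp : Respects L) :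
    (L.map fun p => Equiv.swap p.1 p.2).prod = finRotate n := by
  classical
  have hRp : List.Pairwise Rp L := List.pairwise_iff_get.mpr (fun i j h => hresp i j h)
  have hconn' : ∀ x y : Fin n, Relation.ReflTransGen (ERel L) x y := by
    intro x y
    obtain ⟨wlk⟩ := hT.isConnected.preconnected x y
    induction wlk with
    | nil => exact Relation.ReflTransGen.refl
    | @cons a' b' c' hadj p ih =>
      refine Relation.ReflTransGen.head ?_ ih
      obtain ⟨q, hq, heq⟩ := (hall (Sym2.mk a' b')).mp ((T.mem_edgeSet).mpr hadj)
      refine ⟨q, hq, ?_⟩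
      rcases Sym2.eq_iff.mp heq with ⟨h1, h2⟩ | ⟨h1, h2⟩
      · exact Or.inl ⟨h1.symm, h2.symm⟩
      · exact Or.inr ⟨h2.symm, h1.symm⟩
  have hconn : ∀ x ∈ (Finset.univ : Finset (Fin n)), ∀ y ∈ (Finset.univ : Finset (Fin n)),
      Relation.ReflTransGen (ERel L) x y := fun x _ y _ => hconn' x y
  have hmain := aux_main L.length L Finset.univ (le_refl _)
    (fun p hp => ⟨(hedges p hp).1, Finset.mem_univ _, Finset.mem_univ _⟩)
    (fun p hp q hq hcontra => hnc p.1 q.1 p.2 q.2 hcontra.1 hcontra.2.1 hcontra.2.2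
      (hedges p hp).2 (hedges q hq).2)
    hnodup hRp hconn
  rw [hmain]
  have hsu : (Finset.univ.sort (· ≤ ·) : List (Fin n)) = List.finRange n := Fin.sort_univ n
  rw [hsu]
  obtain ⟨m, rfl⟩ : ∃ m, n = m + 1 := ⟨n - 1, by omega⟩
  ext x
  have hlen : (List.finRange (m + 1)).length = m + 1 := List.length_finRange
  have hxlt : (x : ℕ) < (List.finRange (m + 1)).length := by rw [hlen]; exact x.isLt
  have hx : (List.finRange (m + 1))[(x : ℕ)]'hxlt = x := by
    rw [List.getElem_finRange]
    apply Fin.ext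
    simp
  conv_lhs => rw [← hx]
  rw [List.formPerm_apply_getElem _ (List.nodup_finRange _) _ hxlt, finRotate_succ_apply]
  rw [List.getElem_finRange]
  simp only [Fin.coe_cast, hlen]
  rw [Fin.val_add_one]
  by_cases hxl : x = Fin.last m
  · subst hxl
    simp [Fin.val_last, Nat.mod_self]
  · have hlt : (x : ℕ) < m := Fin.val_lt_last hxl
    rw [if_neg hxl, Nat.mod_eq_of_lt (by omega)]
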